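/- (Erdős–Rado canonization) For every k ≥ 1 and every equivalence relation E on [ℕ]^k, there is an infinite M ⊆ ℕ and a set I ⊆ {0,...,k-1} such that for all k-element subsets a, b of M, a E b iff min-enumeration of a and b agree at all coordinates in I. -/

import Mathlib

open Finset

namespace ErdosRado

theorem ramsey : ∀ (n : ℕ) {C : Type} [Finite C] (col : Finset ℕ → C) (S : Set ℕ),
    S.Infinite →
    ∃ M : Set ℕ, M ⊆ S ∧ M.Infinite ∧ ∃ γ : C,
      ∀ t : Finset ℕ, ↑t ⊆ M → t.card = n → col t = γ := by
  intro n
  induction n with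
  | zero =>
    intro C _ col S hS
    exact ⟨S, subset_rfl, hS, col ∅, fun t _ ht => by rw [Finset.card_eq_zero.mp ht]⟩
  | succ n ih =>
    intro C _ col S hS
    have key : ∀ T : Set ℕ, T.Infinite → ∃ (a : ℕ) (T' : Set ℕ) (γ : C),
        a ∈ T ∧ T' ⊆ T ∧ T'.Infinite ∧ (∀ b ∈ T', a < b) ∧
        (∀ t : Finset ℕ, ↑t ⊆ T' → t.card = n → col (insert a t) = γ) := by
      intro T hT
      obtain ⟨a, haT⟩ := hT.nonempty
      have h2 : (T ∩ Set.Ioi a).Infinite := by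
        apply (hT.diff (Set.finite_Iic a)).mono
        intro b hb
        exact ⟨hb.1, (lt_of_not_ge fun h => hb.2 h : a < b)⟩
      obtain ⟨M, hMsub, hMinf, γ, hγ⟩ := ih (fun t => col (insert a t)) (T ∩ Set.Ioi a) h2
      exact ⟨a, M, γ, haT, hMsub.trans Set.inter_subset_left, hMinf,
        fun b hb => (hMsub hb).2, hγ⟩
    choose a T' γ hmem hsub hinf hlt hγ using key
    let seq : ℕ → {T : Set ℕ // T.Infinite} :=
      fun n => Nat.rec ⟨S, hS⟩ (fun _ p => ⟨T' p.1 p.2, hinf p.1 p.2⟩) n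
    set A : ℕ → ℕ := fun n => a (seq n).1 (seq n).2 with hA
    set G : ℕ → C := fun n => γ (seq n).1 (seq n).2 with hG
    have seq_succ : ∀ n, (seq (n+1)).1 = T' (seq n).1 (seq n).2 := fun n => rfl
    have hsub' : ∀ n, (seq (n+1)).1 ⊆ (seq n).1 := fun n => hsub _ _
    have nested : ∀ m n, m ≤ n → (seq n).1 ⊆ (seq m).1 := by
      intro m n hmn
      induction n, hmn using Nat.le_induction with
      | base => exact subset_rfl
      | succ n hmn ih2 => exact (hsub' n).trans ih2
    have hAmem : ∀ n, A n ∈ (seq n).1 := fun n => hmem _ _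
    have hAlt : ∀ m n, m < n → A m < A n := by
      intro m n hmn
      have h1 : A n ∈ (seq (m+1)).1 := nested (m+1) n hmn (hAmem n)
      rw [seq_succ m] at h1
      exact hlt _ _ _ h1
    have hAstrict : StrictMono A := fun m n h => hAlt m n h
    obtain ⟨c, hc⟩ := Finite.exists_infinite_fiber G
    have hNinf : (G ⁻¹' {c}).Infinite := Set.infinite_coe_iff.mp hc
    refine ⟨A '' (G ⁻¹' {c}), ?_, hNinf.image (hAstrict.injective.injOn), c, ?_⟩
    · rintro x ⟨i, _, rfl⟩
      exact nested 0 i (Nat.zero_le i) (hAmem i)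
    · intro t ht hcard
      have htne : t.Nonempty := Finset.card_pos.mp (by omega)
      obtain ⟨i, hiN, hieq⟩ := ht (t.min'_mem htne)
      have herase : ↑(t.erase (t.min' htne)) ⊆ (seq (i+1)).1 := by
        intro x hx
        rw [Finset.coe_erase] at hx
        obtain ⟨j, hjN, hjeq⟩ := ht hx.1
        have hxgt : t.min' htne < x :=
          lt_of_le_of_ne (t.min'_le x (by exact_mod_cast hx.1)) (Ne.symm (by
            simpa using hx.2))
        have hij : i < j := by
          have h2 : A i < A j := by rw [hieq, hjeq]; exact hxgt
          exact hAstrict.lt_iff_lt.mp h2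
        exact nested (i+1) j hij (hjeq ▸ hAmem j)
      have hcard' : (t.erase (t.min' htne)).card = n := by
        rw [Finset.card_erase_of_mem (t.min'_mem htne), hcard]; omega
      have h5 : col (insert (A i) (t.erase (t.min' htne))) = G i :=
        hγ (seq i).1 (seq i).2 (t.erase (t.min' htne)) (by
          rw [← seq_succ]; exact herase) hcard'
      rw [hieq, Finset.insert_erase (t.min'_mem htne)] at h5
      exact h5.trans hiN

end ErdosRado

namespace ErdosRado

variable {k : ℕ}

/-- rank of a value in a finset -/
def rk (s : Finset ℕ) (v : ℕ) : ℕ := (s.filter (· < v)).card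

lemma rk_image {n : ℕ} (z : Fin n → ℕ) (hz : StrictMono z) (j : Fin n) :
    rk (image z univ) (z j) = (j : ℕ) := by
  unfold rk
  rw [filter_image]
  rw [card_image_of_injective _ hz.injective]
  have : (univ.filter fun a : Fin n => z a < z j) = univ.filter (· < j) := by
    apply filter_congr
    intro a _
    simp [hz.lt_iff_lt]
  rw [this]
  have : (univ.filter (· < j)) = Finset.Iio j := by
    ext a; simp
  rw [this, Fin.card_Iio]

lemma rk_lt {n : ℕ} (s : Finset ℕ) (hs : s.card = n) {v : ℕ} (hv : v ∈ s) :
    rk s v < n := by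
  unfold rk
  rw [← hs]
  apply card_lt_card
  constructor
  · exact filter_subset _ _
  · intro hsub
    have := hsub hv
    simp at this

lemma image_orderEmbOfFin {n : ℕ} (s : Finset ℕ) (hs : s.card = n) :
    image (s.orderEmbOfFin hs) univ = s := by
  have h := range_orderEmbOfFin s hs
  rw [← coe_inj, coe_image, coe_univ, Set.image_univ, h]

lemma orderEmbOfFin_rk {n : ℕ} (s : Finset ℕ) (hs : s.card = n) {v : ℕ} (hv : v ∈ s) :
    s.orderEmbOfFin hs ⟨rk s v, rk_lt s hs hv⟩ = v := by
  set z := s.orderEmbOfFin hs with hz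
  have himg : image z univ = s := image_orderEmbOfFin s hs
  have hv' : v ∈ image z univ := by rw [himg]; exact hv
  obtain ⟨j, _, hj⟩ := mem_image.mp hv'
  have : rk s v = (j : ℕ) := by
    rw [← himg, ← hj]; exact rk_image z z.strictMono j
  have heq : (⟨rk s v, rk_lt s hs hv⟩ : Fin n) = j := Fin.ext this
  rw [heq, hj]

lemma update_strictMono {x : Fin k → ℕ} (hx : StrictMono x) {i : Fin k} {c : ℕ}
    (h1 : ∀ j, j < i → x j < c) (h2 : ∀ j, i < j → c < x j) :
    StrictMono (Function.update x i c) := by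
  intro a b hab
  rcases eq_or_ne a i with ha | ha <;> rcases eq_or_ne b i with hb | hb
  · exact absurd hab (by rw [ha, hb]; exact lt_irrefl i)
  · rw [ha, Function.update_self, Function.update_of_ne hb]
    exact h2 b (by rw [← ha]; exact hab)
  · rw [hb, Function.update_self, Function.update_of_ne ha]
    exact h1 a (by rw [← hb]; exact hab)
  · rw [Function.update_of_ne ha, Function.update_of_ne hb]
    exact hx hab

lemma exists_finset_above {M : Set ℕ} (hM : M.Infinite) (n N : ℕ) :
    ∃ B : Finset ℕ, ↑B ⊆ M ∧ B.card = n ∧ ∀ b ∈ B, N < b := by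
  induction n with
  | zero => exact ⟨∅, by simp, rfl, by simp⟩
  | succ n ih =>
    obtain ⟨B, hBM, hBcard, hBgt⟩ := ih
    obtain ⟨b, hbM, hb⟩ := hM.exists_gt (max N (B.sup id))
    refine ⟨insert b B, ?_, ?_, ?_⟩
    · rw [coe_insert]; exact Set.insert_subset hbM hBM
    · rw [card_insert_of_notMem, hBcard]
      intro hmem
      have : b ≤ B.sup id := le_sup (f := id) hmem
      omega
    · intro x hx
      rcases mem_insert.mp hx with rfl | hx
      · omega
      · exact hBgt x hx

variable (E : {s : Finset ℕ // s.card = k} → {s : Finset ℕ // s.card = k} → Prop)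

/-- the relation transported to tuples -/
def F (x y : Fin k → ℕ) : Prop :=
  ∀ a b : {s : Finset ℕ // s.card = k},
    a.1 = image x univ → b.1 = image y univ → E a b

lemma card_image_univ {x : Fin k → ℕ} (hx : Function.Injective x) :
    (image x univ).card = k := by
  rw [card_image_of_injective _ hx, card_univ, Fintype.card_fin]

/-- tuple to k-subset -/
def mk (x : Fin k → ℕ) (hx : StrictMono x) : {s : Finset ℕ // s.card = k} :=
  ⟨image x univ, card_image_univ hx.injective⟩

lemma F_iff {x y : Fin k → ℕ} (hx : StrictMono x) (hy : StrictMono y) :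
    F E x y ↔ E (mk x hx) (mk y hy) := by
  constructor
  · intro h; exact h _ _ rfl rfl
  · intro h a b ha hb
    have ha' : a = mk x hx := Subtype.ext ha
    have hb' : b = mk y hy := Subtype.ext hb
    rw [ha', hb']; exact h

variable {E}

lemma F_refl (hE : Equivalence E) (x : Fin k → ℕ) : F E x x := by
  intro a b ha hb
  have : a = b := Subtype.ext (ha.trans hb.symm)
  rw [this]; exact hE.refl b

lemma F_symm (hE : Equivalence E) {x y : Fin k → ℕ} (h : F E x y) : F E y x :=
  fun a b ha hb => hE.symm (h b a hb ha)

lemma F_trans (hE : Equivalence E) {x y z : Fin k → ℕ} (hy : StrictMono y)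
    (h1 : F E x y) (h2 : F E y z) : F E x z := by
  intro a b ha hb
  exact hE.trans (h1 a (mk y hy) ha rfl) (h2 (mk y hy) b rfl hb)

end ErdosRado

namespace ErdosRado

variable {k : ℕ} {E : {s : Finset ℕ // s.card = k} → {s : Finset ℕ // s.card = k} → Prop}

/-- the one-coordinate change at `i` preserves the relation -/
def SwapHolds (M : Set ℕ)
    (E : {s : Finset ℕ // s.card = k} → {s : Finset ℕ // s.card = k} → Prop)
    (i : Fin k) : Prop :=
  ∀ x : Fin k → ℕ, StrictMono x → (∀ j, x j ∈ M) → ∀ c, c ∈ M → c ≠ x i →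
    (∀ j, j < i → x j < c) → (∀ j, i < j → c < x j) → F E x (Function.update x i c)

lemma claimA (hE : Equivalence E) {M : Set ℕ} (I : Set (Fin k))
    (hswap : ∀ i : Fin k, i ∉ I → SwapHolds M E i)
    {x y : Fin k → ℕ} (hx : StrictMono x) (hxM : ∀ j, x j ∈ M)
    (hy : StrictMono y) (hyM : ∀ j, y j ∈ M)
    (hagree : ∀ i ∈ I, x i = y i) : F E x y := by
  have main : ∀ n (x y : Fin k → ℕ), StrictMono x → (∀ j, x j ∈ M) → StrictMono y →
      (∀ j, y j ∈ M) → (∀ i ∈ I, x i = y i) →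
      (univ.filter (fun j => x j ≠ y j)).card ≤ n → F E x y := by
    intro n
    induction n with
    | zero =>
      intro x y hx hxM hy hyM hagree hcard
      have hxy : x = y := by
        funext j
        by_contra hne
        have hmem : j ∈ univ.filter (fun j => x j ≠ y j) := by simp [hne]
        have := card_pos.mpr ⟨j, hmem⟩
        omega
      rw [hxy]; exact F_refl hE y
    | succ n ih =>
      intro x y hx hxM hy hyM hagree hcard
      by_cases hD : (univ.filter (fun j => x j ≠ y j)).Nonempty
      swap
      · have hxy : x = y := by
          funext j
          by_contra hne
          exact hD ⟨j, by simp [hne]⟩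
        rw [hxy]; exact F_refl hE y
      · set D := univ.filter (fun j => x j ≠ y j) with hDdef
        set j := D.max' hD with hjdef
        have hjne : x j ≠ y j := (mem_filter.mp (D.max'_mem hD)).2
        have hjI : j ∉ I := fun h => hjne (hagree j h)
        have htop : ∀ l, j < l → x l = y l := by
          intro l hl
          by_contra hne
          have hmem : l ∈ D := by simp [hDdef, hne]
          exact absurd (D.le_max' l hmem) (not_le.mpr hl)
        set w := max (x j) (y j) with hwdef
        have hwM : w ∈ M := by
          rcases le_total (x j) (y j) with h | h
          · rw [hwdef, max_eq_right h]; exact hyM j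
          · rw [hwdef, max_eq_left h]; exact hxM j
        have hxlt : ∀ l, l < j → x l < w := fun l hl =>
          lt_of_lt_of_le (hx hl) (le_max_left _ _)
        have hylt : ∀ l, l < j → y l < w := fun l hl =>
          lt_of_lt_of_le (hy hl) (le_max_right _ _)
        have hxgt : ∀ l, j < l → w < x l := by
          intro l hl
          have h2 : y j < y l := hy hl
          rw [← htop l hl] at h2
          exact max_lt (hx hl) h2
        have hygt : ∀ l, j < l → w < y l := by
          intro l hl
          have h1 : x j < x l := hx hl
          rw [htop l hl] at h1
          exact max_lt h1 (hy hl)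
        set x1 := Function.update x j w with hx1def
        set y1 := Function.update y j w with hy1def
        have hx1 : StrictMono x1 := update_strictMono hx hxlt hxgt
        have hy1 : StrictMono y1 := update_strictMono hy hylt hygt
        have hx1M : ∀ l, x1 l ∈ M := by
          intro l
          rcases eq_or_ne l j with rfl | hne
          · rw [hx1def, Function.update_self]; exact hwM
          · rw [hx1def, Function.update_of_ne hne]; exact hxM l
        have hy1M : ∀ l, y1 l ∈ M := by
          intro l
          rcases eq_or_ne l j with rfl | hne
          · rw [hy1def, Function.update_self]; exact hwM
          · rw [hy1def, Function.update_of_ne hne]; exact hyM l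
        have hFx : F E x x1 := by
          rcases eq_or_ne (x j) w with h | h
          · have : x1 = x := by rw [hx1def, ← h, Function.update_eq_self]
            rw [this]; exact F_refl hE x
          · exact hswap j hjI x hx hxM w hwM (Ne.symm h) hxlt hxgt
        have hFy : F E y y1 := by
          rcases eq_or_ne (y j) w with h | h
          · have : y1 = y := by rw [hy1def, ← h, Function.update_eq_self]
            rw [this]; exact F_refl hE y
          · exact hswap j hjI y hy hyM w hwM (Ne.symm h) hylt hygt
        have hagree1 : ∀ i ∈ I, x1 i = y1 i := by
          intro i hi
          have hne : i ≠ j := fun h => hjI (h ▸ hi)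
          rw [hx1def, hy1def, Function.update_of_ne hne, Function.update_of_ne hne]
          exact hagree i hi
        have hsub : (univ.filter (fun l => x1 l ≠ y1 l)) ⊆ D.erase j := by
          intro l hl
          have hl' := (mem_filter.mp hl).2
          rcases eq_or_ne l j with rfl | hne
          · exfalso; apply hl'
            rw [hx1def, hy1def, Function.update_self, Function.update_self]
          · rw [hx1def, hy1def, Function.update_of_ne hne, Function.update_of_ne hne] at hl'
            exact mem_erase.mpr ⟨hne, by simp [hDdef, hl']⟩
        have hcard1 : (univ.filter (fun l => x1 l ≠ y1 l)).card ≤ n := by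
          have h1 := card_le_card hsub
          rw [card_erase_of_mem (D.max'_mem hD)] at h1
          omega
        have hmid : F E x1 y1 := ih x1 y1 hx1 hx1M hy1 hy1M hagree1 hcard1
        exact F_trans hE hx1 hFx (F_trans hE hy1 hmid (F_symm hE hFy))
  exact main _ x y hx hxM hy hyM hagree le_rfl

end ErdosRado

namespace ErdosRado

variable {k : ℕ} {E : {s : Finset ℕ // s.card = k} → {s : Finset ℕ // s.card = k} → Prop}

lemma rk_formula (x y : Fin k → ℕ) (hx : Function.Injective x) (hy : Function.Injective y)
    (v : ℕ) :
    rk (image x univ ∪ image y univ) v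
      + (univ.filter (fun j => x j < v ∧ ∃ l, y l = x j)).card
    = (univ.filter (fun j => x j < v)).card + (univ.filter (fun j => y j < v)).card := by
  classical
  unfold rk
  rw [filter_union]
  have himg : (image x univ).filter (· < v) ∩ (image y univ).filter (· < v)
      = image x (univ.filter (fun j => x j < v ∧ ∃ l, y l = x j)) := by
    ext w
    simp only [mem_inter, mem_filter, mem_image, mem_univ, true_and]
    constructor
    · rintro ⟨⟨⟨j, rfl⟩, hlt⟩, ⟨⟨l, hl⟩, _⟩⟩
      exact ⟨j, ⟨hlt, l, hl⟩, rfl⟩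
    · rintro ⟨j, ⟨hlt, l, hl⟩, rfl⟩
      exact ⟨⟨⟨j, rfl⟩, hlt⟩, ⟨l, hl⟩, hlt⟩
  have h1 := card_union_add_card_inter ((image x univ).filter (· < v))
    ((image y univ).filter (· < v))
  have h2 : ((image x univ).filter (· < v) ∩ (image y univ).filter (· < v)).card
      = (univ.filter (fun j => x j < v ∧ ∃ l, y l = x j)).card := by
    rw [himg, card_image_of_injective _ hx]
  have h3 : ((image x univ).filter (· < v)).card = (univ.filter (fun j => x j < v)).card := by
    rw [filter_image, card_image_of_injective _ hx]
  have h4 : ((image y univ).filter (· < v)).card = (univ.filter (fun j => y j < v)).card := by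
    rw [filter_image, card_image_of_injective _ hy]
  omega

end ErdosRado

namespace ErdosRado

variable {k : ℕ} {E : {s : Finset ℕ // s.card = k} → {s : Finset ℕ // s.card = k} → Prop}

section Transport

variable {x y x' y' : Fin k → ℕ}

lemma type_lt_flip
    (htype : ∀ i j : Fin k, (x i < y j ↔ x' i < y' j) ∧ (x i = y j ↔ x' i = y' j)) :
    ∀ a b : Fin k, y a < x b ↔ y' a < x' b := by
  intro a b
  have hle : x b ≤ y a ↔ x' b ≤ y' a := by
    rw [le_iff_lt_or_eq, le_iff_lt_or_eq]
    exact or_congr ((htype b a).1) ((htype b a).2)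
  rw [← not_le, ← not_le, hle]

lemma type_flip
    (htype : ∀ i j : Fin k, (x i < y j ↔ x' i < y' j) ∧ (x i = y j ↔ x' i = y' j)) :
    ∀ i j : Fin k, (y i < x j ↔ y' i < x' j) ∧ (y i = x j ↔ y' i = x' j) := by
  intro i j
  refine ⟨type_lt_flip htype i j, ?_⟩
  rw [eq_comm, eq_comm (a := y' i)]
  exact (htype j i).2

lemma rk_union_eq
    (hx : StrictMono x) (hy : StrictMono y) (hx' : StrictMono x') (hy' : StrictMono y')
    (htype : ∀ i j : Fin k, (x i < y j ↔ x' i < y' j) ∧ (x i = y j ↔ x' i = y' j))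
    (i : Fin k) :
    rk (image x univ ∪ image y univ) (x i)
      = rk (image x' univ ∪ image y' univ) (x' i) := by
  classical
  have hylt := type_lt_flip htype
  have h1 := rk_formula x y hx.injective hy.injective (x i)
  have h2 := rk_formula x' y' hx'.injective hy'.injective (x' i)
  have e1 : (univ.filter (fun j => x j < x i)).card
      = (univ.filter (fun j => x' j < x' i)).card := by
    congr 1
    apply filter_congr
    intro j _
    rw [hx.lt_iff_lt, hx'.lt_iff_lt]
  have e2 : (univ.filter (fun j => y j < x i)).card
      = (univ.filter (fun j => y' j < x' i)).card := by
    congr 1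
    apply filter_congr
    intro j _
    exact hylt j i
  have e3 : (univ.filter (fun j => x j < x i ∧ ∃ l, y l = x j)).card
      = (univ.filter (fun j => x' j < x' i ∧ ∃ l, y' l = x' j)).card := by
    congr 1
    apply filter_congr
    intro j _
    apply and_congr
    · rw [hx.lt_iff_lt, hx'.lt_iff_lt]
    · apply exists_congr
      intro l
      rw [eq_comm, eq_comm (a := y' l)]
      exact (htype j l).2
  omega

lemma rk_union_eq'
    (hx : StrictMono x) (hy : StrictMono y) (hx' : StrictMono x') (hy' : StrictMono y')
    (htype : ∀ i j : Fin k, (x i < y j ↔ x' i < y' j) ∧ (x i = y j ↔ x' i = y' j))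
    (i : Fin k) :
    rk (image x univ ∪ image y univ) (y i)
      = rk (image x' univ ∪ image y' univ) (y' i) := by
  rw [union_comm (image x univ), union_comm (image x' univ)]
  exact rk_union_eq hy hx hy' hx' (type_flip htype) i

end Transport

end ErdosRado

namespace ErdosRado

variable {k : ℕ}

/-- The Ramsey coloring of `2k`-sets. -/
def col (E : {s : Finset ℕ // s.card = k} → {s : Finset ℕ // s.card = k} → Prop)
    (c : Finset ℕ) (f g : Fin k → Fin (2*k)) : Prop :=
  ∀ (hc : c.card = 2*k) (a b : {s : Finset ℕ // s.card = k}),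
    a.1 = image (fun i => (c.orderEmbOfFin hc (f i) : ℕ)) univ →
    b.1 = image (fun i => (c.orderEmbOfFin hc (g i) : ℕ)) univ → E a b

variable {E : {s : Finset ℕ // s.card = k} → {s : Finset ℕ // s.card = k} → Prop}

lemma homog_F_iff {M : Set ℕ} (hM : M.Infinite)
    (Γ : (Fin k → Fin (2*k)) → (Fin k → Fin (2*k)) → Prop)
    (hΓ : ∀ c : Finset ℕ, ↑c ⊆ M → c.card = 2*k → ∀ f g, col E c f g ↔ Γ f g)
    {x y : Fin k → ℕ} (hx : StrictMono x) (hy : StrictMono y)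
    (hxM : ∀ i, x i ∈ M) (hyM : ∀ i, y i ∈ M) :
    ∃ f g : Fin k → Fin (2*k),
      (∀ i, (f i : ℕ) = rk (image x univ ∪ image y univ) (x i)) ∧
      (∀ i, (g i : ℕ) = rk (image x univ ∪ image y univ) (y i)) ∧
      (F E x y ↔ Γ f g) := by
  classical
  set A := image x univ ∪ image y univ with hAdef
  have hAM : ↑A ⊆ M := by
    rw [hAdef, coe_union]
    apply Set.union_subset <;> · rw [coe_image, coe_univ, Set.image_univ]
                                 rintro v ⟨i, rfl⟩
                                 first | exact hxM i | exact hyM i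
  have hAcard : A.card ≤ 2*k := by
    have h1 : A.card ≤ (image x univ).card + (image y univ).card := by
      rw [hAdef]; exact card_union_le _ _
    have h2 : (image x univ).card ≤ k := le_trans card_image_le (by simp)
    have h3 : (image y univ).card ≤ k := le_trans card_image_le (by simp)
    omega
  obtain ⟨B, hBM, hBcard, hBgt⟩ := exists_finset_above hM (2*k - A.card) (A.sup id)
  set c := A ∪ B with hcdef
  have hdisj : Disjoint A B := by
    rw [disjoint_left]
    intro a haA haB
    have h1 : a ≤ A.sup id := le_sup (f := id) haA
    have h2 := hBgt a haB
    omega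
  have hccard : c.card = 2*k := by
    rw [hcdef, card_union_of_disjoint hdisj, hBcard]
    omega
  have hcM : ↑c ⊆ M := by
    rw [hcdef, coe_union]
    exact Set.union_subset hAM hBM
  have hsubc : A ⊆ c := subset_union_left
  have hrk : ∀ v ∈ A, rk c v = rk A v := by
    intro v hv
    unfold rk
    rw [hcdef, filter_union]
    have hB0 : B.filter (· < v) = ∅ := by
      rw [filter_eq_empty_iff]
      intro b hb
      have h1 := hBgt b hb
      have h2 : v ≤ A.sup id := le_sup (f := id) hv
      omega
    rw [hB0, union_empty]
  have hxA : ∀ i, x i ∈ A := fun i => mem_union_left _ (mem_image_of_mem x (mem_univ i))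
  have hyA : ∀ i, y i ∈ A := fun i => mem_union_right _ (mem_image_of_mem y (mem_univ i))
  have hrkx : ∀ i, rk A (x i) < 2*k := fun i =>
    lt_of_lt_of_le (rk_lt A rfl (hxA i)) hAcard
  have hrky : ∀ i, rk A (y i) < 2*k := fun i =>
    lt_of_lt_of_le (rk_lt A rfl (hyA i)) hAcard
  refine ⟨fun i => ⟨rk A (x i), hrkx i⟩, fun i => ⟨rk A (y i), hrky i⟩,
    fun i => rfl, fun i => rfl, ?_⟩
  have hembx : ∀ i, (c.orderEmbOfFin hccard ⟨rk A (x i), hrkx i⟩ : ℕ) = x i := by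
    intro i
    have h1 : x i ∈ c := hsubc (hxA i)
    have h2 := orderEmbOfFin_rk c hccard h1
    have h3 : (⟨rk A (x i), hrkx i⟩ : Fin (2*k)) = ⟨rk c (x i), rk_lt c hccard h1⟩ :=
      Fin.ext (hrk _ (hxA i)).symm
    rw [h3]
    exact h2
  have hemby : ∀ i, (c.orderEmbOfFin hccard ⟨rk A (y i), hrky i⟩ : ℕ) = y i := by
    intro i
    have h1 : y i ∈ c := hsubc (hyA i)
    have h2 := orderEmbOfFin_rk c hccard h1
    have h3 : (⟨rk A (y i), hrky i⟩ : Fin (2*k)) = ⟨rk c (y i), rk_lt c hccard h1⟩ :=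
      Fin.ext (hrk _ (hyA i)).symm
    rw [h3]
    exact h2
  have hfx : (fun i => (c.orderEmbOfFin hccard ((fun i => (⟨rk A (x i), hrkx i⟩ : Fin (2*k))) i) : ℕ)) = x :=
    funext hembx
  have hgy : (fun i => (c.orderEmbOfFin hccard ((fun i => (⟨rk A (y i), hrky i⟩ : Fin (2*k))) i) : ℕ)) = y :=
    funext hemby
  rw [← hΓ c hcM hccard]
  constructor
  · intro h hc a b ha hb
    have hceq : hc = hccard := Subsingleton.elim _ _
    subst hceq
    rw [hfx] at ha
    rw [hgy] at hb
    exact h a b ha hb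
  · intro h a b ha hb
    apply h hccard a b
    · rw [ha, hfx]
    · rw [hb, hgy]

lemma inv {M : Set ℕ} (hM : M.Infinite)
    (Γ : (Fin k → Fin (2*k)) → (Fin k → Fin (2*k)) → Prop)
    (hΓ : ∀ c : Finset ℕ, ↑c ⊆ M → c.card = 2*k → ∀ f g, col E c f g ↔ Γ f g)
    {x y x' y' : Fin k → ℕ}
    (hx : StrictMono x) (hy : StrictMono y) (hx' : StrictMono x') (hy' : StrictMono y')
    (hxM : ∀ i, x i ∈ M) (hyM : ∀ i, y i ∈ M)
    (hxM' : ∀ i, x' i ∈ M) (hyM' : ∀ i, y' i ∈ M)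
    (htype : ∀ i j : Fin k, (x i < y j ↔ x' i < y' j) ∧ (x i = y j ↔ x' i = y' j)) :
    F E x y ↔ F E x' y' := by
  obtain ⟨f, g, hf, hg, hiff⟩ := homog_F_iff hM Γ hΓ hx hy hxM hyM
  obtain ⟨f', g', hf', hg', hiff'⟩ := homog_F_iff hM Γ hΓ hx' hy' hxM' hyM'
  have hfeq : f = f' := funext fun i => Fin.ext (by
    rw [hf i, hf' i]
    exact rk_union_eq hx hy hx' hy' htype i)
  have hgeq : g = g' := funext fun i => Fin.ext (by
    rw [hg i, hg' i]
    exact rk_union_eq' hx hy hx' hy' htype i)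
  rw [hiff, hiff', hfeq, hgeq]

end ErdosRado

namespace ErdosRado

variable {k : ℕ} {E : {s : Finset ℕ // s.card = k} → {s : Finset ℕ // s.card = k} → Prop}

lemma rk_mono_mem {s : Finset ℕ} {v w : ℕ} (hv : v ∈ s) (hvw : v < w) :
    rk s v < rk s w := by
  unfold rk
  apply card_lt_card
  constructor
  · intro u hu
    rw [mem_filter] at hu ⊢
    exact ⟨hu.1, hu.2.trans hvw⟩
  · intro hsub
    have h1 := hsub (mem_filter.mpr ⟨hv, hvw⟩)
    rw [mem_filter] at h1
    exact absurd h1.2 (lt_irrefl v)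

lemma rk_lt_iff {s : Finset ℕ} {v w : ℕ} (hv : v ∈ s) (hw : w ∈ s) :
    v < w ↔ rk s v < rk s w := by
  constructor
  · exact fun h => rk_mono_mem hv h
  · intro h
    rcases lt_trichotomy v w with h1 | h1 | h1
    · exact h1
    · subst h1; exact absurd h (lt_irrefl _)
    · exact absurd (rk_mono_mem hw h1) (not_lt.mpr (le_of_lt h))

lemma rk_eq_iff {s : Finset ℕ} {v w : ℕ} (hv : v ∈ s) (hw : w ∈ s) :
    v = w ↔ rk s v = rk s w := by
  constructor
  · rintro rfl; rfl
  · intro h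
    rcases lt_trichotomy v w with h1 | h1 | h1
    · exact absurd (rk_mono_mem hv h1) (by omega)
    · exact h1
    · exact absurd (rk_mono_mem hw h1) (by omega)

lemma update_memM {M : Set ℕ} {x : Fin k → ℕ} (hxM : ∀ j, x j ∈ M) {i : Fin k} {c : ℕ}
    (hc : c ∈ M) : ∀ j, Function.update x i c j ∈ M := by
  intro j
  rcases eq_or_ne j i with rfl | h
  · rw [Function.update_self]; exact hc
  · rw [Function.update_of_ne h]; exact hxM j

lemma gt_pair_rel {x : Fin k → ℕ} {c : ℕ} {i : Fin k} (hx : StrictMono x)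
    (hgt : x i < c) (hhi : ∀ j, i < j → c < x j) (a b : Fin k) :
    (x a < Function.update x i c b ↔ ((b = i ∧ a ≤ i) ∨ (b ≠ i ∧ a < b))) ∧
    (x a = Function.update x i c b ↔ (b ≠ i ∧ a = b)) := by
  rcases eq_or_ne b i with rfl | hbne
  · rw [Function.update_self]
    constructor
    · constructor
      · intro h
        left
        refine ⟨rfl, ?_⟩
        by_contra hai
        exact absurd h (not_lt.mpr (le_of_lt (hhi a (lt_of_not_ge hai))))
      · rintro (⟨-, hai⟩ | ⟨hbi, -⟩)
        · exact lt_of_le_of_lt (hx.monotone hai) hgt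
        · exact absurd rfl hbi
    · constructor
      · intro h
        exfalso
        rcases le_or_gt a b with hai | hai
        · exact absurd h (ne_of_lt (lt_of_le_of_lt (hx.monotone hai) hgt))
        · exact absurd h.symm (ne_of_lt (hhi a hai))
      · rintro ⟨hbi, -⟩
        exact absurd rfl hbi
  · rw [Function.update_of_ne hbne]
    constructor
    · rw [hx.lt_iff_lt]
      constructor
      · intro h; exact Or.inr ⟨hbne, h⟩
      · rintro (⟨hbi, -⟩ | ⟨-, h⟩)
        · exact absurd hbi hbne
        · exact h
    · rw [hx.injective.eq_iff]
      constructor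
      · intro h; exact ⟨hbne, h⟩
      · rintro ⟨-, h⟩; exact h

lemma gt_transfer (hE : Equivalence E) {M : Set ℕ} (hM : M.Infinite)
    (Γ : (Fin k → Fin (2*k)) → (Fin k → Fin (2*k)) → Prop)
    (hΓ : ∀ c : Finset ℕ, ↑c ⊆ M → c.card = 2*k → ∀ f g, col E c f g ↔ Γ f g)
    {i : Fin k} {x x' : Fin k → ℕ} {c c' : ℕ}
    (hx : StrictMono x) (hxM : ∀ j, x j ∈ M) (hcM : c ∈ M)
    (hlo : ∀ j, j < i → x j < c) (hhi : ∀ j, i < j → c < x j) (hgt : x i < c)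
    (hx' : StrictMono x') (hxM' : ∀ j, x' j ∈ M) (hcM' : c' ∈ M)
    (hlo' : ∀ j, j < i → x' j < c') (hhi' : ∀ j, i < j → c' < x' j) (hgt' : x' i < c')
    (h : F E x (Function.update x i c)) : F E x' (Function.update x' i c') := by
  have hu := update_strictMono hx hlo hhi
  have hu' := update_strictMono hx' hlo' hhi'
  refine (inv hM Γ hΓ hx hu hx' hu' hxM (update_memM hxM hcM) hxM'
    (update_memM hxM' hcM') ?_).mp h
  intro a b
  exact ⟨((gt_pair_rel hx hgt hhi a b).1).trans ((gt_pair_rel hx' hgt' hhi' a b).1).symm,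
    ((gt_pair_rel hx hgt hhi a b).2).trans ((gt_pair_rel hx' hgt' hhi' a b).2).symm⟩

lemma swapHolds_of_instance (hE : Equivalence E) {M : Set ℕ} (hM : M.Infinite)
    (Γ : (Fin k → Fin (2*k)) → (Fin k → Fin (2*k)) → Prop)
    (hΓ : ∀ c : Finset ℕ, ↑c ⊆ M → c.card = 2*k → ∀ f g, col E c f g ↔ Γ f g)
    {i : Fin k} {x : Fin k → ℕ} {c : ℕ}
    (hx : StrictMono x) (hxM : ∀ j, x j ∈ M) (hcM : c ∈ M) (hne : c ≠ x i)
    (hlo : ∀ j, j < i → x j < c) (hhi : ∀ j, i < j → c < x j)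
    (h : F E x (Function.update x i c)) : SwapHolds M E i := by
  -- first produce a `gt` instance
  have gtinst : ∃ (z : Fin k → ℕ) (d : ℕ), StrictMono z ∧ (∀ j, z j ∈ M) ∧ d ∈ M ∧
      (∀ j, j < i → z j < d) ∧ (∀ j, i < j → d < z j) ∧ z i < d ∧
      F E z (Function.update z i d) := by
    rcases lt_or_gt_of_ne hne with hlt | hgt
    · -- c < x i : flip
      refine ⟨Function.update x i c, x i, update_strictMono hx hlo hhi,
        update_memM hxM hcM, hxM i, ?_, ?_, ?_, ?_⟩
      · intro j hj
        rw [Function.update_of_ne (ne_of_lt hj)]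
        exact hx hj
      · intro j hj
        rw [Function.update_of_ne (ne_of_gt hj)]
        exact hx hj
      · rw [Function.update_self]; exact hlt
      · have h2 : Function.update (Function.update x i c) i (x i) = x := by
          rw [Function.update_idem, Function.update_eq_self]
        rw [h2]
        exact F_symm hE h
    · exact ⟨x, c, hx, hxM, hcM, hlo, hhi, hgt, h⟩
  obtain ⟨z, d, hz, hzM, hdM, hdlo, hdhi, hdgt, hFz⟩ := gtinst
  intro x' hx' hxM' c' hcM' hne' hlo' hhi'
  rcases lt_or_gt_of_ne hne' with hlt' | hgt'
  · -- c' < x' i : flip the target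
    have hx'' := update_strictMono hx' hlo' hhi'
    have h1 : ∀ j, j < i → Function.update x' i c' j < x' i := by
      intro j hj
      rw [Function.update_of_ne (ne_of_lt hj)]
      exact hx' hj
    have h2 : ∀ j, i < j → x' i < Function.update x' i c' j := by
      intro j hj
      rw [Function.update_of_ne (ne_of_gt hj)]
      exact hx' hj
    have h3 : Function.update x' i c' i < x' i := by
      rw [Function.update_self]; exact hlt'
    have h4 := gt_transfer hE hM Γ hΓ hz hzM hdM hdlo hdhi hdgt hx''
      (update_memM hxM' hcM') (hxM' i) h1 h2 h3 hFz
    have h5 : Function.update (Function.update x' i c') i (x' i) = x' := by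
      rw [Function.update_idem, Function.update_eq_self]
    rw [h5] at h4
    exact F_symm hE h4
  · exact gt_transfer hE hM Γ hΓ hz hzM hdM hdlo hdhi hdgt hx' hxM' hcM' hlo' hhi' hgt' hFz

end ErdosRado

namespace ErdosRado

variable {k : ℕ} {E : {s : Finset ℕ // s.card = k} → {s : Finset ℕ // s.card = k} → Prop}

lemma final_wiggle (hE : Equivalence E) {M : Set ℕ} (hM : M.Infinite)
    (Γ : (Fin k → Fin (2*k)) → (Fin k → Fin (2*k)) → Prop)
    (hΓ : ∀ c : Finset ℕ, ↑c ⊆ M → c.card = 2*k → ∀ f g, col E c f g ↔ Γ f g)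
    {p v : Fin k → ℕ} {i : Fin k} {c : ℕ}
    (hp : StrictMono p) (hpM : ∀ j, p j ∈ M) (hv : StrictMono v) (hvM : ∀ j, v j ∈ M)
    (hcM : c ∈ M) (hF : F E p v) (hgt : v i < c) (hcv : ∀ b, i < b → c < v b)
    (hne1 : ∀ b, p b ≠ v i) (hne2 : ∀ b, p b ≠ c) (hsep : ∀ b, v i < p b → c < p b) :
    SwapHolds M E i := by
  have hvlo : ∀ j, j < i → v j < c := fun j hj => (hv hj).trans hgt
  have hv' := update_strictMono hv hvlo hcv
  have htype : ∀ a b : Fin k,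
      (p a < v b ↔ p a < Function.update v i c b) ∧
      (p a = v b ↔ p a = Function.update v i c b) := by
    intro a b
    rcases eq_or_ne b i with rfl | hbne
    · rw [Function.update_self]
      constructor
      · constructor
        · intro h; exact h.trans hgt
        · intro h
          rcases lt_trichotomy (p a) (v b) with h1 | h1 | h1
          · exact h1
          · exact absurd h1 (hne1 a)
          · exact absurd h (not_lt.mpr (le_of_lt (hsep a h1)))
      · constructor
        · intro h; exact absurd h (hne1 a)
        · intro h; exact absurd h (hne2 a)
    · rw [Function.update_of_ne hbne]
      exact ⟨Iff.rfl, Iff.rfl⟩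
  have hF' : F E p (Function.update v i c) :=
    (inv hM Γ hΓ hp hv hp hv' hpM hvM hpM (update_memM hvM hcM) htype).mp hF
  have hFvv' : F E v (Function.update v i c) :=
    F_trans hE hp (F_symm hE hF) hF'
  exact swapHolds_of_instance hE hM Γ hΓ hv hvM hcM (ne_of_gt hgt) hvlo hcv hFvv'


lemma claimB (hE : Equivalence E) {M : Set ℕ} (hM : M.Infinite)
    (Γ : (Fin k → Fin (2*k)) → (Fin k → Fin (2*k)) → Prop)
    (hΓ : ∀ c : Finset ℕ, ↑c ⊆ M → c.card = 2*k → ∀ f g, col E c f g ↔ Γ f g) :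
    ∀ d : ℕ, ∀ i : Fin k, k - (i : ℕ) ≤ d → ∀ x y : Fin k → ℕ,
      StrictMono x → (∀ j, x j ∈ M) → StrictMono y → (∀ j, y j ∈ M) →
      F E x y → x i < y i → SwapHolds M E i := by
  intro d
  induction d with
  | zero => intro i hi; exfalso; have := i.2; omega
  | succ d ih =>
    intro i hi x y hx hxM hy hyM hFxy hlt
    classical
    set A := image x univ ∪ image y univ with hAdef
    have hxA : ∀ a, x a ∈ A := fun a => mem_union_left _ (mem_image_of_mem x (mem_univ a))
    have hyA : ∀ a, y a ∈ A := fun a => mem_union_right _ (mem_image_of_mem y (mem_univ a))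
    have hAcard : A.card ≤ 2*k := by
      have h1 : A.card ≤ (image x univ).card + (image y univ).card := by
        rw [hAdef]; exact card_union_le _ _
      have h2 : (image x univ).card ≤ k := le_trans card_image_le (by simp)
      have h3 : (image y univ).card ≤ k := le_trans card_image_le (by simp)
      omega
    set px : Fin k → ℕ := fun a => rk A (x a) with hpxdef
    set py : Fin k → ℕ := fun a => rk A (y a) with hpydef
    have hpxlt : ∀ a, px a < 2*k := fun a => lt_of_lt_of_le (rk_lt A rfl (hxA a)) hAcard
    have hpylt : ∀ a, py a < 2*k := fun a => lt_of_lt_of_le (rk_lt A rfl (hyA a)) hAcard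
    have hpxmono : ∀ a b : Fin k, a < b → px a < px b :=
      fun a b hab => rk_mono_mem (hxA a) (hx hab)
    have hpymono : ∀ a b : Fin k, a < b → py a < py b :=
      fun a b hab => rk_mono_mem (hyA a) (hy hab)
    have hxlt_iff : ∀ a b, x a < y b ↔ px a < py b := fun a b => rk_lt_iff (hxA a) (hyA b)
    have hxeq_iff : ∀ a b, x a = y b ↔ px a = py b := fun a b => rk_eq_iff (hxA a) (hyA b)
    obtain ⟨B, hBM, hBcard, _⟩ := exists_finset_above hM (6*k) 0
    set emb := B.orderEmbOfFin hBcard with hembdef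
    have hembM : ∀ j, (emb j : ℕ) ∈ M := fun j => hBM (orderEmbOfFin_mem B hBcard j)
    have hemblt : ∀ (m n : ℕ) (hm : m < 6*k) (hn : n < 6*k),
        ((emb ⟨m, hm⟩ : ℕ) < emb ⟨n, hn⟩ ↔ m < n) := by
      intro m n hm hn
      rw [emb.lt_iff_lt]
      exact Iff.rfl
    have hembeq : ∀ (m n : ℕ) (hm : m < 6*k) (hn : n < 6*k),
        ((emb ⟨m, hm⟩ : ℕ) = emb ⟨n, hn⟩ ↔ m = n) := by
      intro m n hm hn
      rw [emb.injective.eq_iff]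
      exact ⟨fun h => congrArg Fin.val h, fun h => Fin.ext h⟩
    have hb1 : ∀ a, 3 * px a < 6*k := fun a => by have := hpxlt a; omega
    have hb2 : ∀ a, 3 * py a < 6*k := fun a => by have := hpylt a; omega
    have hb3 : ∀ a, 3 * py a + 1 < 6*k := fun a => by have := hpylt a; omega
    have hb4 : ∀ a, 3 * px a + 2 < 6*k := fun a => by have := hpxlt a; omega
    set u : Fin k → ℕ := fun a => emb ⟨3 * px a, hb1 a⟩ with hudef
    set v : Fin k → ℕ := fun a => emb ⟨3 * py a, hb2 a⟩ with hvdef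
    have hu : StrictMono u := by
      intro a b hab
      simp only [hudef]
      rw [hemblt]
      have := hpxmono a b hab
      omega
    have hv : StrictMono v := by
      intro a b hab
      simp only [hvdef]
      rw [hemblt]
      have := hpymono a b hab
      omega
    have huM : ∀ a, u a ∈ M := fun a => hembM _
    have hvM : ∀ a, v a ∈ M := fun a => hembM _
    have htype_uv : ∀ a b : Fin k, (x a < y b ↔ u a < v b) ∧ (x a = y b ↔ u a = v b) := by
      intro a b
      constructor
      · rw [hxlt_iff]
        simp only [hudef, hvdef]
        rw [hemblt]
        omega
      · rw [hxeq_iff]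
        simp only [hudef, hvdef]
        rw [hembeq]
        omega
    have hFuv : F E u v := (inv hM Γ hΓ hx hy hu hv hxM hyM huM hvM htype_uv).mp hFxy
    have hpxyi : px i < py i := (hxlt_iff i i).mp hlt
    by_cases hcase : ∀ a, x a ≠ y i
    · -- Case 1: no coordinate of x equals y i
      have hnei : ∀ a, px a ≠ py i := fun a h => hcase a ((hxeq_iff a i).mpr h)
      apply final_wiggle hE hM Γ hΓ hu huM hv hvM (hembM ⟨3 * py i + 1, hb3 i⟩) hFuv
      · simp only [hvdef]; rw [hemblt]; omega
      · intro b hb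
        simp only [hvdef]
        rw [hemblt]
        have := hpymono i b hb
        omega
      · intro b
        simp only [hudef, hvdef]
        intro heq
        have := (hembeq _ _ _ _).mp heq
        exact hnei b (by omega)
      · intro b
        simp only [hudef]
        intro heq
        have := (hembeq _ _ _ _).mp heq
        omega
      · intro b
        simp only [hudef, hvdef]
        rw [hemblt, hemblt]
        have := hnei b
        omega
    · -- Case 2: some x a = y i
      push_neg at hcase
      obtain ⟨a, ha⟩ := hcase
      have hia : i < a := by
        have h1 : x i < x a := by rw [ha]; exact hlt
        exact hx.lt_iff_lt.mp h1
      have hxya : x a < y a := by rw [ha]; exact hy hia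
      have hSa : SwapHolds M E a :=
        ih a (by have := a.2; have h2 : (i:ℕ) < a := hia; omega) x y hx hxM hy hyM hFxy hxya
      have hpaeq : px a = py i := (hxeq_iff a i).mp ha
      have hbne_pxpyi : ∀ b, b ≠ a → px b ≠ py i := by
        intro b hba h
        have h2 : x b = y i := (hxeq_iff b i).mpr h
        have h3 : x b = x a := by rw [h2, ha]
        exact hba (hx.injective h3)
      have hlo' : ∀ j, j < a → u j < (emb ⟨3 * px a + 2, hb4 a⟩ : ℕ) := by
        intro j hj
        simp only [hudef]
        rw [hemblt]
        have := hpxmono j a hj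
        omega
      have hhi' : ∀ j, a < j → (emb ⟨3 * px a + 2, hb4 a⟩ : ℕ) < u j := by
        intro j hj
        simp only [hudef]
        rw [hemblt]
        have := hpxmono a j hj
        omega
      set u' := Function.update u a (emb ⟨3 * px a + 2, hb4 a⟩ : ℕ) with hu'def
      have hu' : StrictMono u' := update_strictMono hu hlo' hhi'
      have hu'M : ∀ j, u' j ∈ M := update_memM huM (hembM _)
      have hFuu' : F E u u' := by
        apply hSa u hu huM _ (hembM _) ?_ hlo' hhi'
        simp only [hudef]
        intro heq
        have := (hembeq _ _ _ _).mp heq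
        omega
      have hFu'v : F E u' v := F_trans hE hu (F_symm hE hFuu') hFuv
      apply final_wiggle hE hM Γ hΓ hu' hu'M hv hvM (hembM ⟨3 * py i + 1, hb3 i⟩) hFu'v
      · simp only [hvdef]; rw [hemblt]; omega
      · intro b hb
        simp only [hvdef]
        rw [hemblt]
        have := hpymono i b hb
        omega
      · intro b
        rcases eq_or_ne b a with rfl | hba
        · rw [hu'def, Function.update_self]
          simp only [hvdef]
          intro heq
          have := (hembeq _ _ _ _).mp heq
          omega
        · rw [hu'def, Function.update_of_ne hba]
          simp only [hudef, hvdef]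
          intro heq
          have := (hembeq _ _ _ _).mp heq
          exact hbne_pxpyi b hba (by omega)
      · intro b
        rcases eq_or_ne b a with rfl | hba
        · rw [hu'def, Function.update_self]
          intro heq
          have := (hembeq _ _ _ _).mp heq
          omega
        · rw [hu'def, Function.update_of_ne hba]
          simp only [hudef]
          intro heq
          have := (hembeq _ _ _ _).mp heq
          omega
      · intro b
        rcases eq_or_ne b a with rfl | hba
        · rw [hu'def, Function.update_self]
          simp only [hvdef]
          rw [hemblt, hemblt]
          omega
        · rw [hu'def, Function.update_of_ne hba]
          simp only [hudef, hvdef]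
          rw [hemblt, hemblt]
          have := hbne_pxpyi b hba
          omega

end ErdosRado

namespace ErdosRado

variable {k : ℕ} {E : {s : Finset ℕ // s.card = k} → {s : Finset ℕ // s.card = k} → Prop}

lemma swap_of_F_ne (hE : Equivalence E) {M : Set ℕ} (hM : M.Infinite)
    (Γ : (Fin k → Fin (2*k)) → (Fin k → Fin (2*k)) → Prop)
    (hΓ : ∀ c : Finset ℕ, ↑c ⊆ M → c.card = 2*k → ∀ f g, col E c f g ↔ Γ f g)
    {x y : Fin k → ℕ} {i : Fin k}
    (hx : StrictMono x) (hxM : ∀ j, x j ∈ M) (hy : StrictMono y) (hyM : ∀ j, y j ∈ M)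
    (hF : F E x y) (hne : x i ≠ y i) : SwapHolds M E i := by
  rcases lt_or_gt_of_ne hne with h | h
  · exact claimB hE hM Γ hΓ k i (by omega) x y hx hxM hy hyM hF h
  · exact claimB hE hM Γ hΓ k i (by omega) y x hy hyM hx hxM (F_symm hE hF) h

end ErdosRado

/-- Erdős–Rado canonization theorem: every equivalence relation on the `k`-element
subsets of `ℕ` is canonical (given by `E_I` for some `I ⊆ {0,…,k-1}`) on the
`k`-subsets of some infinite `M ⊆ ℕ`. -/
theorem stmt_10 (k : ℕ) (hk : 1 ≤ k)
    (E : {s : Finset ℕ // s.card = k} → {s : Finset ℕ // s.card = k} → Prop)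
    (hE : Equivalence E) :
    ∃ M : Set ℕ, M.Infinite ∧ ∃ I : Set (Fin k),
      ∀ a b : {s : Finset ℕ // s.card = k}, ↑a.1 ⊆ M → ↑b.1 ⊆ M →
        (E a b ↔ ∀ i ∈ I,
          (a.1.orderIsoOfFin a.2 i : ℕ) = (b.1.orderIsoOfFin b.2 i : ℕ)) := by
  classical
  obtain ⟨M, -, hMinf, γ, hhom⟩ := ErdosRado.ramsey (2*k) (ErdosRado.col E)
    Set.univ Set.infinite_univ
  have hΓ : ∀ c : Finset ℕ, ↑c ⊆ M → c.card = 2*k →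
      ∀ f g, ErdosRado.col E c f g ↔ γ f g := by
    intro c hc hcard f g
    rw [hhom c hc hcard]
  refine ⟨M, hMinf, {i | ¬ ErdosRado.SwapHolds M E i}, ?_⟩
  intro a b haM hbM
  set x : Fin k → ℕ := fun i => (a.1.orderIsoOfFin a.2 i : ℕ) with hxdef
  set y : Fin k → ℕ := fun i => (b.1.orderIsoOfFin b.2 i : ℕ) with hydef
  have hxe : x = fun i => a.1.orderEmbOfFin a.2 i :=
    funext fun i => Finset.coe_orderIsoOfFin_apply a.1 a.2 i
  have hye : y = fun i => b.1.orderEmbOfFin b.2 i :=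
    funext fun i => Finset.coe_orderIsoOfFin_apply b.1 b.2 i
  have hx : StrictMono x := by rw [hxe]; exact (a.1.orderEmbOfFin a.2).strictMono
  have hy : StrictMono y := by rw [hye]; exact (b.1.orderEmbOfFin b.2).strictMono
  have hxM : ∀ i, x i ∈ M := by
    intro i
    apply haM
    rw [hxe]
    exact Finset.orderEmbOfFin_mem a.1 a.2 i
  have hyM : ∀ i, y i ∈ M := by
    intro i
    apply hbM
    rw [hye]
    exact Finset.orderEmbOfFin_mem b.1 b.2 i
  have haeq : a.1 = Finset.image x Finset.univ := by
    rw [hxe]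
    exact (ErdosRado.image_orderEmbOfFin a.1 a.2).symm
  have hbeq : b.1 = Finset.image y Finset.univ := by
    rw [hye]
    exact (ErdosRado.image_orderEmbOfFin b.1 b.2).symm
  constructor
  · intro hEab i hiI
    by_contra hne
    apply hiI
    have hF : ErdosRado.F E x y := by
      intro a' b' ha' hb'
      have ha2 : a' = a := Subtype.ext (ha'.trans haeq.symm)
      have hb2 : b' = b := Subtype.ext (hb'.trans hbeq.symm)
      rw [ha2, hb2]
      exact hEab
    exact ErdosRado.swap_of_F_ne hE hMinf γ hΓ hx hxM hy hyM hF hne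
  · intro hagree
    have hF : ErdosRado.F E x y := by
      apply ErdosRado.claimA hE {i | ¬ ErdosRado.SwapHolds M E i}
        (fun i hi => not_not.mp hi) hx hxM hy hyM
      intro i hi
      exact hagree i hi
    exact hF a b haeq hbeq
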